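/- For the 6×6 matrix H(g,g;z) with |g| < 1 and |z| < 1, the diagonal metric Θ with entries Θ₁₁ = Θ₆₆ = (1-g)(1-z)/(1+z), Θ₂₂ = Θ₅₅ = 1-g, Θ₃₃ = Θ₄₄ = 1+g is positive definite, and consequently all eigenvalues of H(g,g;z) are real. -/

import Mathlib

set_option maxRecDepth 10000
set_option maxHeartbeats 1000000

open Matrix
open scoped ComplexOrder

@[simp] lemma cons_val_five' {α : Type*} {m : ℕ} (x : α) (u : Fin (m+5) → α) :
    Matrix.vecCons x u 5 =
      Matrix.vecHead (Matrix.vecTail (Matrix.vecTail (Matrix.vecTail (Matrix.vecTail u)))) :=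
  rfl

theorem stmt3 (g z : ℝ) (hg : |g| < 1) (hz : |z| < 1) :
    let H : Matrix (Fin 6) (Fin 6) ℝ :=
      !![2, -1-z, 0, 0, 0, 0;
         -1+z, 3, -1-g, -1-g, 0, 0;
         0, -1+g, 2, 0, -1+g, 0;
         0, -1+g, 0, 2, -1+g, 0;
         0, 0, -1-g, -1-g, 3, -1+z;
         0, 0, 0, 0, -1-z, 2]
    let Θ : Matrix (Fin 6) (Fin 6) ℝ :=
      Matrix.diagonal ![(1-g)*(1-z)/(1+z), 1-g, 1+g, 1+g, 1-g, (1-g)*(1-z)/(1+z)]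
    Θ.PosDef ∧ ∀ μ : ℂ, μ ∈ spectrum ℂ (H.map Complex.ofReal) → μ.im = 0 := by
  intro H Θ
  obtain ⟨hg1, hg2⟩ := abs_lt.mp hg
  obtain ⟨hz1, hz2⟩ := abs_lt.mp hz
  have h1g : (0:ℝ) < 1 - g := by linarith
  have h1g' : (0:ℝ) < 1 + g := by linarith
  have h1z : (0:ℝ) < 1 - z := by linarith
  have h1z' : (0:ℝ) < 1 + z := by linarith
  have hdpos : ∀ i : Fin 6,
      (0:ℝ) < ![(1-g)*(1-z)/(1+z), 1-g, 1+g, 1+g, 1-g, (1-g)*(1-z)/(1+z)] i := by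
    intro i
    fin_cases i <;> simp <;> first | positivity | linarith
  have hΘ : Θ.PosDef := Matrix.PosDef.diagonal hdpos
  refine ⟨hΘ, ?_⟩
  have hzne : (1:ℝ) + z ≠ 0 := ne_of_gt h1z'
  -- symmetry of Θ * H
  have hsymm : (Θ * H)ᵀ = Θ * H := by
    ext i j
    rw [Matrix.transpose_apply]
    fin_cases i <;> fin_cases j <;>
      · simp only [Θ, H, Matrix.diagonal_mul]
        try norm_num [Matrix.vecHead, Matrix.vecTail]
        try field_simp
        try ring
  intro μ hμ
  set Hc : Matrix (Fin 6) (Fin 6) ℂ := H.map Complex.ofReal with hHc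
  set Θc : Matrix (Fin 6) (Fin 6) ℂ := Θ.map Complex.ofReal with hΘc
  -- eigenvector
  rw [spectrum.mem_iff] at hμ
  have hdet : (algebraMap ℂ (Matrix (Fin 6) (Fin 6) ℂ) μ - Hc).det = 0 := by
    by_contra hne
    exact hμ ((Matrix.isUnit_iff_isUnit_det _).mpr (isUnit_iff_ne_zero.mpr hne))
  obtain ⟨v, hv0, hv⟩ := (Matrix.exists_mulVec_eq_zero_iff).mpr hdet
  have hev : Hc *ᵥ v = μ • v := by
    have h1 : (algebraMap ℂ (Matrix (Fin 6) (Fin 6) ℂ) μ) *ᵥ v = μ • v := by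
      rw [Algebra.algebraMap_eq_smul_one, Matrix.smul_mulVec, Matrix.one_mulVec]
    have h2 := hv
    rw [Matrix.sub_mulVec, h1, sub_eq_zero] at h2
    exact h2.symm
  -- Θc positive definite
  have hΘcpos : Θc.PosDef := by
    have : Θc = Matrix.diagonal
        (fun i => ((![(1-g)*(1-z)/(1+z), 1-g, 1+g, 1+g, 1-g, (1-g)*(1-z)/(1+z)] i : ℝ) : ℂ)) := by
      rw [hΘc]
      show (Matrix.diagonal _).map _ = _
      rw [Matrix.diagonal_map (by simp)]
    rw [this]
    exact Matrix.PosDef.diagonal fun i => Complex.zero_lt_real.mpr (hdpos i)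
  set c : ℂ := star v ⬝ᵥ (Θc *ᵥ v) with hc
  have hcpos : 0 < c := hΘcpos.dotProduct_mulVec_pos hv0
  obtain ⟨hcre, hcim⟩ := Complex.lt_def.mp hcpos
  simp only [Complex.zero_re, Complex.zero_im] at hcre hcim
  -- the Hermitian matrix Θc * Hc
  set Ac : Matrix (Fin 6) (Fin 6) ℂ := (Θ * H).map Complex.ofReal with hAc
  have hAcmul : Ac = Θc * Hc := by
    rw [hAc, hΘc, hHc]
    ext i j
    simp [Matrix.map_apply, Matrix.mul_apply]
  have hAcherm : Acᴴ = Ac := by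
    ext i j
    simp only [hAc, Matrix.conjTranspose_apply, Matrix.map_apply, Complex.star_def,
      Complex.conj_ofReal]
    rw [show (Θ * H) j i = (Θ * H)ᵀ i j from rfl, hsymm]
  -- quadratic form
  set q : ℂ := star v ⬝ᵥ (Ac *ᵥ v) with hq
  have hq_eq : q = μ * c := by
    rw [hq, hAcmul, ← Matrix.mulVec_mulVec, hev, Matrix.mulVec_smul, dotProduct_smul, hc]
    simp [smul_eq_mul]
  have hq_real : star q = q := by
    conv_lhs => rw [hq, ← Matrix.star_dotProduct, Matrix.star_mulVec, hAcherm,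
      ← Matrix.dotProduct_mulVec]
  have hqim : q.im = 0 := Complex.conj_eq_iff_im.mp (by rw [← Complex.star_def]; exact hq_real)
  rw [hq_eq, Complex.mul_im, ← hcim, mul_zero, zero_add] at hqim
  exact (mul_eq_zero.mp hqim).resolve_right (ne_of_gt hcre)
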